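/- With the above construction and N = 2M, for every interior grid index 0 < i < M the derivative of ṽ at x = ib/M satisfies the closed form ṽ'(ib/M) = v_0·( (π/(2b)) Σ_{k=1}^{M-1} (-1)^{i+k} c(k,i) - (π/(2bM)) Σ_{k=1}^{M-1} (-1)^{i+k} k·c(k,i) - 1/b ) + v_M·( (π/(2bM)) Σ_{k=1}^{M-1} (-1)^{i+k} k·c(k,i) + 1/b ) - (π/(2b)) Σ_{k=1}^{M-1} (-1)^{i+k} c(k,i)·v_k, where c(k,i) := Cot((k+i)π/N) + Cot((k-i)π/N) and Cot(x) = cot(x) if x/π is not an integer and Cot(x) = 0 otherwise. -/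

import Mathlib

open scoped Classical


lemma aux_tele (θ : ℝ) (M : ℕ) :
    4 * Real.sin (θ/2)^2 * ∑ j ∈ Finset.Ico 1 M, (j:ℝ) * Real.sin ((j:ℝ)*θ) =
      (M:ℝ) * Real.sin (((M:ℝ)-1)*θ) - ((M:ℝ)-1) * Real.sin ((M:ℝ)*θ) := by
  induction M with
  | zero => simp
  | succ n ih =>
    rcases Nat.eq_zero_or_pos n with h | h
    · subst h; simp
    · rw [Finset.sum_Ico_succ_top h]
      have hc : Real.cos θ = 1 - 2 * Real.sin (θ/2)^2 := by
        have h1 : Real.cos (2*(θ/2)) = 2*Real.cos (θ/2)^2 - 1 := Real.cos_two_mul _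
        have h2 := Real.sin_sq_add_cos_sq (θ/2)
        rw [show 2*(θ/2) = θ by ring] at h1
        linarith
      push_cast
      have e1 : ((n:ℝ)+1-1)*θ = (n:ℝ)*θ := by ring
      have e2 : ((n:ℝ)+1)*θ = (n:ℝ)*θ + θ := by ring
      have e3 : ((n:ℝ)-1)*θ = (n:ℝ)*θ - θ := by ring
      rw [e1, e2, Real.sin_add]
      rw [e3, Real.sin_sub] at ih
      linear_combination ih + (2*(n:ℝ)*Real.sin ((n:ℝ)*θ))*hc

lemma lemT (M : ℕ) (hM : 0 < M) (m : ℤ) :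
    ∑ j ∈ Finset.Ico 1 M, (j:ℝ) * Real.sin ((j:ℝ) * ((m:ℝ) * Real.pi / (M:ℝ))) =
      -((M:ℝ)/2) * Real.cos ((m:ℝ)*Real.pi) *
        (if ∃ n : ℤ, (m:ℝ) * Real.pi / (2*(M:ℝ)) = (n:ℝ)*Real.pi then 0
         else Real.cot ((m:ℝ)*Real.pi/(2*(M:ℝ)))) := by
  have hM' : (M:ℝ) ≠ 0 := Nat.cast_ne_zero.2 hM.ne'
  set θ : ℝ := (m:ℝ) * Real.pi / (M:ℝ) with hθ
  have hhalf : θ/2 = (m:ℝ)*Real.pi/(2*(M:ℝ)) := by rw [hθ]; ring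
  by_cases h : ∃ n : ℤ, (m:ℝ) * Real.pi / (2*(M:ℝ)) = (n:ℝ)*Real.pi
  · rw [if_pos h]
    obtain ⟨n, hn⟩ := h
    have h2 : θ = 2*(n:ℝ)*Real.pi := by
      rw [hθ]; field_simp at hn ⊢; linarith
    rw [Finset.sum_eq_zero, mul_zero]
    intro j _
    rw [show (j:ℝ)*θ = ((2*(j:ℤ)*n : ℤ):ℝ)*Real.pi by rw [h2]; push_cast; ring,
      Real.sin_int_mul_pi, mul_zero]
  · rw [if_neg h]
    have hs : Real.sin (θ/2) ≠ 0 := by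
      rw [hhalf]; intro h0
      obtain ⟨n, hn⟩ := Real.sin_eq_zero_iff.1 h0
      exact h ⟨n, hn.symm⟩
    have hMθ : (M:ℝ)*θ = (m:ℝ)*Real.pi := by rw [hθ]; field_simp
    have hsinM : Real.sin ((M:ℝ)*θ) = 0 := by rw [hMθ]; exact Real.sin_int_mul_pi m
    have hsinM1 : Real.sin (((M:ℝ)-1)*θ) = -(Real.cos ((m:ℝ)*Real.pi) * Real.sin θ) := by
      rw [show ((M:ℝ)-1)*θ = (m:ℝ)*Real.pi - θ by rw [← hMθ]; ring, Real.sin_sub,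
        Real.sin_int_mul_pi]; ring
    have hsinθ : Real.sin θ = 2 * Real.sin (θ/2) * Real.cos (θ/2) := by
      conv_lhs => rw [show θ = 2*(θ/2) by ring]
      rw [Real.sin_two_mul]
    have H := aux_tele θ M
    rw [hsinM, hsinM1, hsinθ] at H
    rw [← hhalf, Real.cot_eq_cos_div_sin]
    field_simp
    have h2 : (2*Real.sin (θ/2)) * ((∑ j ∈ Finset.Ico 1 M, (j:ℝ) * Real.sin ((j:ℝ)*θ)) * (2*Real.sin (θ/2)) + (M:ℝ)*Real.cos ((m:ℝ)*Real.pi)*Real.cos (θ/2)) = 0 := by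
      linear_combination H
    rcases mul_eq_zero.1 h2 with h3 | h3
    · exact absurd (by linarith : Real.sin (θ/2) = 0) hs
    · linarith

lemma cosAdd (k i : ℕ) : Real.cos (((k:ℝ)+(i:ℝ))*Real.pi) = (-1:ℝ)^(i+k) := by
  rw [show ((k:ℝ)+(i:ℝ))*Real.pi = 0 + (((k:ℤ)+(i:ℤ) : ℤ):ℝ)*Real.pi by push_cast; ring,
    Real.cos_add_int_mul_pi, Real.cos_zero, mul_one,
    show (k:ℤ)+(i:ℤ) = ((i+k:ℕ):ℤ) by push_cast; ring, zpow_natCast]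

lemma cosSub (k i : ℕ) : Real.cos (((k:ℝ)-(i:ℝ))*Real.pi) = (-1:ℝ)^(i+k) := by
  rw [show ((k:ℝ)-(i:ℝ))*Real.pi = 0 + (((k:ℤ)-(i:ℤ) : ℤ):ℝ)*Real.pi by push_cast; ring,
    Real.cos_add_int_mul_pi, Real.cos_zero, mul_one,
    zpow_sub₀ (by norm_num : (-1:ℝ) ≠ 0), zpow_natCast, zpow_natCast,
    div_eq_iff (pow_ne_zero i (by norm_num : (-1:ℝ) ≠ 0)), pow_add]
  have h2 : ((-1:ℝ)^i)*((-1:ℝ)^i) = 1 := by rw [← mul_pow]; norm_num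
  linear_combination (-((-1:ℝ)^k)) * h2

lemma keyLem (M : ℕ) (hM : 0 < M) (k i : ℕ) :
    ∑ j ∈ Finset.Ico 1 M,
        (j:ℝ) * (Real.sin (Real.pi*(j:ℝ)*(k:ℝ)/(M:ℝ)) * Real.cos ((j:ℝ)*Real.pi*(i:ℝ)/(M:ℝ))) =
      -((M:ℝ)/4) * (-1:ℝ)^(i+k) *
        ((if ∃ n : ℤ, ((k:ℝ)+(i:ℝ))*Real.pi/(2*(M:ℝ)) = (n:ℝ)*Real.pi then 0
            else Real.cot (((k:ℝ)+(i:ℝ))*Real.pi/(2*(M:ℝ))))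
          + (if ∃ n : ℤ, ((k:ℝ)-(i:ℝ))*Real.pi/(2*(M:ℝ)) = (n:ℝ)*Real.pi then 0
            else Real.cot (((k:ℝ)-(i:ℝ))*Real.pi/(2*(M:ℝ))))) := by
  have h1 := lemT M hM ((k:ℤ)+(i:ℤ))
  have h2 := lemT M hM ((k:ℤ)-(i:ℤ))
  push_cast at h1 h2
  calc ∑ j ∈ Finset.Ico 1 M,
        (j:ℝ) * (Real.sin (Real.pi*(j:ℝ)*(k:ℝ)/(M:ℝ)) * Real.cos ((j:ℝ)*Real.pi*(i:ℝ)/(M:ℝ)))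
      = ∑ j ∈ Finset.Ico 1 M,
          ((1/2) * ((j:ℝ) * Real.sin ((j:ℝ)*(((k:ℝ)+(i:ℝ))*Real.pi/(M:ℝ))))
            + (1/2) * ((j:ℝ) * Real.sin ((j:ℝ)*(((k:ℝ)-(i:ℝ))*Real.pi/(M:ℝ))))) := by
        refine Finset.sum_congr rfl fun j _ => ?_
        rw [show (j:ℝ)*(((k:ℝ)+(i:ℝ))*Real.pi/(M:ℝ))
              = Real.pi*(j:ℝ)*(k:ℝ)/(M:ℝ) + (j:ℝ)*Real.pi*(i:ℝ)/(M:ℝ) by ring,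
          show (j:ℝ)*(((k:ℝ)-(i:ℝ))*Real.pi/(M:ℝ))
              = Real.pi*(j:ℝ)*(k:ℝ)/(M:ℝ) - (j:ℝ)*Real.pi*(i:ℝ)/(M:ℝ) by ring,
          Real.sin_add, Real.sin_sub]
        ring
    _ = (1/2) * ∑ j ∈ Finset.Ico 1 M, (j:ℝ) * Real.sin ((j:ℝ)*(((k:ℝ)+(i:ℝ))*Real.pi/(M:ℝ)))
        + (1/2) * ∑ j ∈ Finset.Ico 1 M, (j:ℝ) * Real.sin ((j:ℝ)*(((k:ℝ)-(i:ℝ))*Real.pi/(M:ℝ))) := by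
        rw [Finset.sum_add_distrib, ← Finset.mul_sum, ← Finset.mul_sum]
    _ = _ := by rw [h1, h2, cosAdd, cosSub]; ring

/-- Closed form for `ṽ'(ib/M)` at interior grid indices `0 < i < M`
(with `N = 2M`), where `c(k,i) = Cot((k+i)π/N) + Cot((k-i)π/N)` and `Cot(x)` is
`cot(x)` when `x/π` is not an integer and `0` otherwise. -/
theorem stmt_11 (M : ℕ) (hM : 2 ≤ M) (b : ℝ) (hb : 0 < b) (v : ℕ → ℝ) :
    let a₁ : ℝ := v 0
    let a₀ : ℝ := (v M - v 0) / b
    let B : ℕ → ℝ := fun j => (j : ℝ) ^ 2 * ∑ k ∈ Finset.Ico 1 M,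
      Real.sin (Real.pi * (j : ℝ) * (k : ℝ) / (M : ℝ)) *
        ((2 * a₁ * Real.pi ^ 2) / ((M : ℝ) * b ^ 2)
          + (2 * a₀ * Real.pi ^ 2 * (k : ℝ)) / (b * (M : ℝ) ^ 2)
          - (2 * Real.pi ^ 2 / ((M : ℝ) * b ^ 2)) * v k)
    let vt : ℝ → ℝ := fun x =>
      a₁ + a₀ * x - (b / Real.pi) ^ 2 *
        ∑ j ∈ Finset.Ico 1 M, (B j / (j : ℝ) ^ 2) * Real.sin ((j : ℝ) * Real.pi * x / b)
    let Cot : ℝ → ℝ := fun x => if ∃ m : ℤ, x = (m : ℝ) * Real.pi then 0 else Real.cot x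
    let c : ℕ → ℕ → ℝ := fun k i =>
      Cot (((k : ℝ) + (i : ℝ)) * Real.pi / (2 * (M : ℝ)))
        + Cot (((k : ℝ) - (i : ℝ)) * Real.pi / (2 * (M : ℝ)))
    ∀ i : ℕ, 0 < i → i < M →
      deriv vt ((i : ℝ) * b / (M : ℝ)) =
        v 0 * ((Real.pi / (2 * b)) * (∑ k ∈ Finset.Ico 1 M, (-1 : ℝ) ^ (i + k) * c k i)
              - (Real.pi / (2 * b * (M : ℝ))) *
                  (∑ k ∈ Finset.Ico 1 M, (-1 : ℝ) ^ (i + k) * (k : ℝ) * c k i)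
              - 1 / b)
        + v M * ((Real.pi / (2 * b * (M : ℝ))) *
                  (∑ k ∈ Finset.Ico 1 M, (-1 : ℝ) ^ (i + k) * (k : ℝ) * c k i)
              + 1 / b)
        - (Real.pi / (2 * b)) * ∑ k ∈ Finset.Ico 1 M, (-1 : ℝ) ^ (i + k) * c k i * v k := by
  intro a₁ a₀ B vt Cot c i hi hiM
  have hM0 : 0 < M := by omega
  have hMne : (M:ℝ) ≠ 0 := Nat.cast_ne_zero.2 hM0.ne'
  have hbne : b ≠ 0 := hb.ne'
  have hπ : Real.pi ≠ 0 := Real.pi_ne_zero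
  have ha₁ : a₁ = v 0 := rfl
  have ha₀ : a₀ = (v M - v 0) / b := rfl
  set x₀ : ℝ := (i:ℝ) * b / (M:ℝ) with hx₀
  -- derivative computation
  have hder : HasDerivAt vt (a₀ - (b/Real.pi)^2 * ∑ j ∈ Finset.Ico 1 M,
      (B j/(j:ℝ)^2) * (Real.cos ((j:ℝ)*Real.pi*x₀/b) * ((j:ℝ)*Real.pi/b))) x₀ := by
    have h1 : HasDerivAt (fun x:ℝ => a₁ + a₀*x) a₀ x₀ := by
      simpa using ((hasDerivAt_id x₀).const_mul a₀).const_add a₁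
    have h2 : HasDerivAt (fun x:ℝ => ∑ j ∈ Finset.Ico 1 M,
        (B j/(j:ℝ)^2) * Real.sin ((j:ℝ)*Real.pi*x/b))
        (∑ j ∈ Finset.Ico 1 M,
          (B j/(j:ℝ)^2) * (Real.cos ((j:ℝ)*Real.pi*x₀/b) * ((j:ℝ)*Real.pi/b))) x₀ := by
      apply HasDerivAt.fun_sum
      intro j _
      have h3 : HasDerivAt (fun x:ℝ => (j:ℝ)*Real.pi*x/b) ((j:ℝ)*Real.pi/b) x₀ := by
        simpa using ((hasDerivAt_id x₀).const_mul ((j:ℝ)*Real.pi)).div_const b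
      exact h3.sin.const_mul _
    exact h1.sub (h2.const_mul ((b/Real.pi)^2))
  rw [hder.deriv]
  -- rewrite cos argument and B j / j^2
  have hcosarg : ∀ j : ℕ, (j:ℝ)*Real.pi*x₀/b = (j:ℝ)*Real.pi*(i:ℝ)/(M:ℝ) := by
    intro j; rw [hx₀]; field_simp
  have hBj : ∀ j ∈ Finset.Ico 1 M, B j / (j:ℝ)^2 = ∑ k ∈ Finset.Ico 1 M,
      Real.sin (Real.pi*(j:ℝ)*(k:ℝ)/(M:ℝ)) *
        ((2 * a₁ * Real.pi ^ 2) / ((M : ℝ) * b ^ 2)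
          + (2 * a₀ * Real.pi ^ 2 * (k : ℝ)) / (b * (M : ℝ) ^ 2)
          - (2 * Real.pi ^ 2 / ((M : ℝ) * b ^ 2)) * v k) := by
    intro j hj
    have hj1 : 1 ≤ j := (Finset.mem_Ico.1 hj).1
    have hj0 : ((j:ℝ))^2 ≠ 0 := pow_ne_zero 2 (Nat.cast_ne_zero.2 (by omega))
    exact mul_div_cancel_left₀ _ hj0
  have hcki : ∀ k : ℕ,
      ((if ∃ n : ℤ, ((k:ℝ)+(i:ℝ))*Real.pi/(2*(M:ℝ)) = (n:ℝ)*Real.pi then 0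
          else Real.cot (((k:ℝ)+(i:ℝ))*Real.pi/(2*(M:ℝ))))
        + (if ∃ n : ℤ, ((k:ℝ)-(i:ℝ))*Real.pi/(2*(M:ℝ)) = (n:ℝ)*Real.pi then 0
          else Real.cot (((k:ℝ)-(i:ℝ))*Real.pi/(2*(M:ℝ))))) = c k i := fun k => rfl
  calc a₀ - (b/Real.pi)^2 * ∑ j ∈ Finset.Ico 1 M,
        (B j/(j:ℝ)^2) * (Real.cos ((j:ℝ)*Real.pi*x₀/b) * ((j:ℝ)*Real.pi/b))
      = a₀ - (b/Real.pi)^2 * ∑ j ∈ Finset.Ico 1 M, ∑ k ∈ Finset.Ico 1 M,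
          (Real.sin (Real.pi*(j:ℝ)*(k:ℝ)/(M:ℝ)) *
            ((2 * a₁ * Real.pi ^ 2) / ((M : ℝ) * b ^ 2)
              + (2 * a₀ * Real.pi ^ 2 * (k : ℝ)) / (b * (M : ℝ) ^ 2)
              - (2 * Real.pi ^ 2 / ((M : ℝ) * b ^ 2)) * v k)) *
            (Real.cos ((j:ℝ)*Real.pi*(i:ℝ)/(M:ℝ)) * ((j:ℝ)*Real.pi/b)) := by
        congr 2
        refine Finset.sum_congr rfl fun j hj => ?_
        rw [hBj j hj, hcosarg j, Finset.sum_mul]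
    _ = a₀ - (b/Real.pi)^2 * ∑ k ∈ Finset.Ico 1 M,
          ((((2 * a₁ * Real.pi ^ 2) / ((M : ℝ) * b ^ 2)
              + (2 * a₀ * Real.pi ^ 2 * (k : ℝ)) / (b * (M : ℝ) ^ 2)
              - (2 * Real.pi ^ 2 / ((M : ℝ) * b ^ 2)) * v k) * (Real.pi/b)) *
            ∑ j ∈ Finset.Ico 1 M,
              (j:ℝ) * (Real.sin (Real.pi*(j:ℝ)*(k:ℝ)/(M:ℝ)) *
                Real.cos ((j:ℝ)*Real.pi*(i:ℝ)/(M:ℝ)))) := by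
        rw [Finset.sum_comm]
        congr 2
        refine Finset.sum_congr rfl fun k _ => ?_
        rw [Finset.mul_sum]
        refine Finset.sum_congr rfl fun j _ => ?_
        ring
    _ = a₀ - (b/Real.pi)^2 * ∑ k ∈ Finset.Ico 1 M,
          ((((2 * a₁ * Real.pi ^ 2) / ((M : ℝ) * b ^ 2)
              + (2 * a₀ * Real.pi ^ 2 * (k : ℝ)) / (b * (M : ℝ) ^ 2)
              - (2 * Real.pi ^ 2 / ((M : ℝ) * b ^ 2)) * v k) * (Real.pi/b)) *
            (-((M:ℝ)/4) * (-1:ℝ)^(i+k) * c k i)) := by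
        congr 2
        refine Finset.sum_congr rfl fun k _ => ?_
        rw [keyLem M hM0 k i, hcki k]
    _ = (v M - v 0)/b + ∑ k ∈ Finset.Ico 1 M,
          (Real.pi/(2*b)) * ((-1:ℝ)^(i+k) * c k i) *
            (v 0 + (v M - v 0)*(k:ℝ)/(M:ℝ) - v k) := by
        rw [ha₀, ha₁, Finset.mul_sum, sub_eq_add_neg, ← Finset.sum_neg_distrib]
        congr 1
        refine Finset.sum_congr rfl fun k _ => ?_
        field_simp
        ring
    _ = _ := by
        rw [show ∑ k ∈ Finset.Ico 1 M,
              (Real.pi/(2*b)) * ((-1:ℝ)^(i+k) * c k i) *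
                (v 0 + (v M - v 0)*(k:ℝ)/(M:ℝ) - v k)
            = ∑ k ∈ Finset.Ico 1 M, ((v 0 * (Real.pi/(2*b))) * ((-1:ℝ)^(i+k) * c k i))
              + ∑ k ∈ Finset.Ico 1 M,
                  (((v M - v 0) * (Real.pi/(2*b*(M:ℝ)))) * ((-1:ℝ)^(i+k) * (k:ℝ) * c k i))
              - ∑ k ∈ Finset.Ico 1 M, ((Real.pi/(2*b)) * ((-1:ℝ)^(i+k) * c k i * v k)) by
          rw [← Finset.sum_add_distrib, ← Finset.sum_sub_distrib]
          exact Finset.sum_congr rfl fun k _ => by field_simp]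
        rw [← Finset.mul_sum, ← Finset.mul_sum, ← Finset.mul_sum]
        ring
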